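/- Let X = {x_1, …, x_n} be a universe of points, let S_in ⊆ X be a fixed input set of size n_in ≥ 2, and let S_out be a uniformly random subset of S_in of size n_out (1 ≤ n_out ≤ n_in, sampled without replacement). Let K ∈ ℝ^{n×n} be symmetric positive semidefinite, and for an SPSD matrix M define C_M := Σ_{i=1}^n p_in,i M_ii − p_inᵀ M p_in. Then E[(p_in − q_out)ᵀ K (p_in − q_out)] = (1/n_out)·((n_in − n_out)/(n_in − 1))·C_K, and for any nonempty index set I ⊆ {1,…,n}, E[max_{i∈I} (e_iᵀ K (p_in − q_out))²] ≥ (1/n_out)·((n_in − n_out)/(n_in − 1))·max_{i∈I} C_{K e_i e_iᵀ K}, where e_i is the i-th standard basis vector of ℝ^n. -/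

import Mathlib

open MeasureTheory Matrix Finset

noncomputable section

/-- Probability vector of a finite index set: mass `1/|S|` on each element of `S`. -/
def probVec {n : ℕ} (S : Finset (Fin n)) : Fin n → ℝ :=
  fun i => if i ∈ S then ((S.card : ℝ))⁻¹ else 0

/-- `C_M = ∑ i p_in,i M_ii − p_inᵀ M p_in`. -/
def Cmat {n : ℕ} (Sin : Finset (Fin n)) (M : Matrix (Fin n) (Fin n) ℝ) : ℝ :=
  (∑ i, probVec Sin i * M i i) - probVec Sin ⬝ᵥ (M *ᵥ probVec Sin)

lemma card1 {α : Type*} [DecidableEq α] (s : Finset α) (r : ℕ) (a : α) (ha : a ∈ s) :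
    ((s.powersetCard (r+1)).filter (fun T => a ∈ T)).card = (s.card - 1).choose r := by
  rw [← Finset.card_erase_of_mem ha, ← Finset.card_powersetCard r (s.erase a)]
  apply Finset.card_nbij' (fun T => T.erase a) (fun T => insert a T)
  · intro T hT
    simp only [Finset.mem_coe, Finset.mem_filter, Finset.mem_powersetCard] at hT ⊢
    refine ⟨fun x hx => ?_, ?_⟩
    · rcases Finset.mem_erase.1 hx with ⟨hxa, hxT⟩
      exact Finset.mem_erase.2 ⟨hxa, hT.1.1 hxT⟩
    · rw [Finset.card_erase_of_mem hT.2, hT.1.2]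
      omega
  · intro T hT
    simp only [Finset.mem_coe, Finset.mem_filter, Finset.mem_powersetCard] at hT ⊢
    have haT : a ∉ T := fun h => (Finset.mem_erase.1 (hT.1 h)).1 rfl
    refine ⟨⟨fun x hx => ?_, ?_⟩, Finset.mem_insert_self _ _⟩
    · rcases Finset.mem_insert.1 hx with h | h
      · exact h ▸ ha
      · exact Finset.mem_of_mem_erase (hT.1 h)
    · rw [Finset.card_insert_of_notMem haT, hT.2]
  · intro T hT
    simp only [Finset.mem_coe, Finset.mem_filter] at hT
    exact Finset.insert_erase hT.2
  · intro T hT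
    simp only [Finset.mem_coe, Finset.mem_powersetCard] at hT
    exact Finset.erase_insert (fun h => (Finset.mem_erase.1 (hT.1 h)).1 rfl)

lemma card2 {α : Type*} [DecidableEq α] (s : Finset α) (r : ℕ) (a b : α) (ha : a ∈ s)
    (hb : b ∈ s) (hab : a ≠ b) :
    ((s.powersetCard (r+2)).filter (fun T => a ∈ T ∧ b ∈ T)).card = (s.card - 2).choose r := by
  have h1 : ((s.powersetCard (r+2)).filter (fun T => a ∈ T ∧ b ∈ T)).card =
      (((s.erase a).powersetCard (r+1)).filter (fun T => b ∈ T)).card := by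
    apply Finset.card_nbij' (fun T => T.erase a) (fun T => insert a T)
    · intro T hT
      simp only [Finset.mem_coe, Finset.mem_filter, Finset.mem_powersetCard] at hT ⊢
      obtain ⟨⟨hsub, hcard⟩, haT, hbT⟩ := hT
      refine ⟨⟨fun x hx => ?_, ?_⟩, Finset.mem_erase.2 ⟨(Ne.symm hab), hbT⟩⟩
      · rcases Finset.mem_erase.1 hx with ⟨hxa, hxT⟩
        exact Finset.mem_erase.2 ⟨hxa, hsub hxT⟩
      · rw [Finset.card_erase_of_mem haT, hcard]
        omega
    · intro T hT
      simp only [Finset.mem_coe, Finset.mem_filter, Finset.mem_powersetCard] at hT ⊢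
      obtain ⟨⟨hsub, hcard⟩, hbT⟩ := hT
      have haT : a ∉ T := fun h => (Finset.mem_erase.1 (hsub h)).1 rfl
      refine ⟨⟨fun x hx => ?_, ?_⟩, Finset.mem_insert_self _ _, Finset.mem_insert_of_mem hbT⟩
      · rcases Finset.mem_insert.1 hx with h | h
        · exact h ▸ ha
        · exact Finset.mem_of_mem_erase (hsub h)
      · rw [Finset.card_insert_of_notMem haT, hcard]
    · intro T hT
      simp only [Finset.mem_coe, Finset.mem_filter] at hT
      exact Finset.insert_erase hT.2.1
    · intro T hT
      simp only [Finset.mem_coe, Finset.mem_filter, Finset.mem_powersetCard] at hT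
      exact Finset.erase_insert (fun h => (Finset.mem_erase.1 (hT.1.1 h)).1 rfl)
  rw [h1, card1 (s.erase a) r b (Finset.mem_erase.2 ⟨Ne.symm hab, hb⟩),
    Finset.card_erase_of_mem ha]
  congr 1

lemma Ssum {n : ℕ} (Sin : Finset (Fin n)) (nin nout : ℕ) (hnin : Sin.card = nin)
    (hnin2 : 2 ≤ nin) (hnout1 : 1 ≤ nout) (hnout2 : nout ≤ nin) (a b : Fin n) :
    ∑ T ∈ Sin.powersetCard nout,
        (probVec Sin a - probVec T a) * (probVec Sin b - probVec T b) =
      (nin.choose nout : ℝ) * ((1 / (nout : ℝ)) * (((nin : ℝ) - nout) / ((nin : ℝ) - 1))) *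
        ((if a = b then probVec Sin a else 0) - probVec Sin a * probVec Sin b) := by
  have hm0 : (nin : ℝ) ≠ 0 := by positivity
  have hm1 : (nin : ℝ) - 1 ≠ 0 := by
    have : (2:ℝ) ≤ (nin:ℝ) := by exact_mod_cast hnin2
    linarith
  have ht0 : (nout : ℝ) ≠ 0 := by positivity
  by_cases ha : a ∈ Sin
  · by_cases hb : b ∈ Sin
    · -- main case
      set N : ℕ := nin.choose nout with hN
      set N1a : ℕ := ((Sin.powersetCard nout).filter (fun T => a ∈ T)).card with hN1a
      set N1b : ℕ := ((Sin.powersetCard nout).filter (fun T => b ∈ T)).card with hN1b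
      -- N1 identity
      have hN1eq : ∀ c : Fin n, c ∈ Sin →
          (((Sin.powersetCard nout).filter (fun T => c ∈ T)).card : ℝ) =
            (N : ℝ) * (nout : ℝ) / (nin : ℝ) := by
        intro c hc
        obtain ⟨k, rfl⟩ : ∃ k, nout = k + 1 := ⟨nout - 1, by omega⟩
        rw [card1 Sin k c hc, hnin]
        obtain ⟨m, rfl⟩ : ∃ m, nin = m + 1 := ⟨nin - 1, by omega⟩
        have h := Nat.add_one_mul_choose_eq m k
        have h' : ((m+1) * Nat.choose m k : ℝ) = ((m+1).choose (k+1) * (k+1) : ℝ) := by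
          exact_mod_cast congrArg (fun x : ℕ => (x : ℝ)) h
        push_cast at h' ⊢
        field_simp
        linarith [h']
      have hsumcongr : ∀ T ∈ Sin.powersetCard nout,
          (probVec Sin a - probVec T a) * (probVec Sin b - probVec T b) =
          ((nin:ℝ)⁻¹ - (if a ∈ T then ((nout:ℝ))⁻¹ else 0)) *
          ((nin:ℝ)⁻¹ - (if b ∈ T then ((nout:ℝ))⁻¹ else 0)) := by
        intro T hT
        rw [Finset.mem_powersetCard] at hT
        unfold probVec
        rw [if_pos ha, if_pos hb, hnin, hT.2]
      rw [Finset.sum_congr rfl hsumcongr]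
      have hexp : ∀ T : Finset (Fin n),
          ((nin:ℝ)⁻¹ - (if a ∈ T then ((nout:ℝ))⁻¹ else 0)) *
          ((nin:ℝ)⁻¹ - (if b ∈ T then ((nout:ℝ))⁻¹ else 0)) =
          (nin:ℝ)⁻¹ * (nin:ℝ)⁻¹
            - (nin:ℝ)⁻¹ * (if b ∈ T then ((nout:ℝ))⁻¹ else 0)
            - (nin:ℝ)⁻¹ * (if a ∈ T then ((nout:ℝ))⁻¹ else 0)
            + (if a ∈ T ∧ b ∈ T then ((nout:ℝ))⁻¹ * ((nout:ℝ))⁻¹ else 0) := by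
        intro T
        by_cases h1 : a ∈ T <;> by_cases h2 : b ∈ T <;> simp [h1, h2] <;> ring
      rw [Finset.sum_congr rfl (fun T _ => hexp T)]
      rw [Finset.sum_add_distrib, Finset.sum_sub_distrib, Finset.sum_sub_distrib]
      rw [Finset.sum_const, ← Finset.mul_sum, ← Finset.mul_sum]
      have hsum_ind : ∀ c : Fin n,
          (∑ T ∈ Sin.powersetCard nout, (if c ∈ T then ((nout:ℝ))⁻¹ else 0)) =
            (((Sin.powersetCard nout).filter (fun T => c ∈ T)).card : ℝ) * ((nout:ℝ))⁻¹ := by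
        intro c
        rw [← Finset.sum_filter]
        simp [Finset.sum_const, mul_comm]
      have hcardP : (Sin.powersetCard nout).card = N := by
        rw [Finset.card_powersetCard, hnin]
      by_cases hab : a = b
      · subst hab
        have hpair : (∑ T ∈ Sin.powersetCard nout,
            (if a ∈ T ∧ a ∈ T then ((nout:ℝ))⁻¹ * ((nout:ℝ))⁻¹ else 0)) =
            (N1a : ℝ) * (((nout:ℝ))⁻¹ * ((nout:ℝ))⁻¹) := by
          rw [← Finset.sum_filter]
          simp only [and_self]
          rw [Finset.sum_const]
          simp [hN1a, mul_comm]
        rw [hpair, hsum_ind a, hcardP]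
        rw [hN1eq a ha]
        simp only [probVec, if_pos ha, if_true, hnin]
        field_simp
        have hinv : (nin:ℝ) * (nin:ℝ)⁻¹ = 1 := mul_inv_cancel₀ hm0
        linear_combination ((nout:ℝ) * (N:ℝ) * ((nin:ℝ) * (nin:ℝ)⁻¹ + 1)) * hinv
      · have hpair : (∑ T ∈ Sin.powersetCard nout,
            (if a ∈ T ∧ b ∈ T then ((nout:ℝ))⁻¹ * ((nout:ℝ))⁻¹ else 0)) =
            ((((Sin.powersetCard nout).filter (fun T => a ∈ T ∧ b ∈ T)).card : ℝ)) *
              (((nout:ℝ))⁻¹ * ((nout:ℝ))⁻¹) := by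
          rw [← Finset.sum_filter, Finset.sum_const]
          simp [mul_comm]
        have hN2eq : ((((Sin.powersetCard nout).filter (fun T => a ∈ T ∧ b ∈ T)).card : ℝ)) =
            (N : ℝ) * ((nout : ℝ) * ((nout:ℝ) - 1)) / ((nin : ℝ) * ((nin:ℝ) - 1)) := by
          rcases Nat.lt_or_ge nout 2 with h2 | h2
          · have hnout1' : nout = 1 := by omega
            subst hnout1'
            have : ((Sin.powersetCard 1).filter (fun T => a ∈ T ∧ b ∈ T)) = ∅ := by
              apply Finset.filter_false_of_mem
              intro T hT
              rw [Finset.mem_powersetCard] at hT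
              rintro ⟨haT, hbT⟩
              exact hab (Finset.card_le_one.1 (le_of_eq hT.2) a haT b hbT)
            rw [this]
            simp
          · obtain ⟨k, rfl⟩ : ∃ k, nout = k + 2 := ⟨nout - 2, by omega⟩
            obtain ⟨m, rfl⟩ : ∃ m, nin = m + 2 := ⟨nin - 2, by omega⟩
            rw [card2 Sin k a b ha hb hab, hnin]
            simp only [Nat.add_sub_cancel]
            have h1 := Nat.add_one_mul_choose_eq m k
            have h2' := Nat.add_one_mul_choose_eq (m+1) (k+1)
            have h1' : ((m+1) * Nat.choose m k : ℝ) = ((m+1).choose (k+1) * (k+1) : ℝ) := by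
              exact_mod_cast congrArg (fun x : ℕ => (x : ℝ)) h1
            have h2'' : ((m+2) * Nat.choose (m+1) (k+1) : ℝ) =
                ((m+2).choose (k+2) * (k+2) : ℝ) := by
              exact_mod_cast congrArg (fun x : ℕ => (x : ℝ)) h2'
            push_cast at h1' h2'' ⊢
            have hm2 : (m:ℝ) + 1 ≠ 0 := by positivity
            have hm3 : (m:ℝ) + 2 ≠ 0 := by positivity
            rw [hN]
            have hD : ((m:ℝ) + 2) * ((m:ℝ) + 2 - 1) ≠ 0 := by
              have : ((m:ℝ) + 2 - 1) = (m:ℝ) + 1 := by ring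
              rw [this]; positivity
            rw [eq_div_iff hD]
            linear_combination ((m:ℝ)+2) * h1' + ((k:ℝ)+1) * h2'' 
        rw [hpair, hsum_ind a, hsum_ind b, hcardP, hN1eq a ha, hN1eq b hb, hN2eq]
        simp only [probVec, if_pos ha, if_pos hb, hnin, if_neg hab]
        field_simp
        have hinv : (nin:ℝ) * (nin:ℝ)⁻¹ = 1 := mul_inv_cancel₀ hm0
        linear_combination ((nout:ℝ) * (N:ℝ) * ((nin:ℝ) - 1) * ((nin:ℝ) * (nin:ℝ)⁻¹ + 1)) * hinv
    · -- b ∉ Sin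
      have : ∀ T ∈ Sin.powersetCard nout,
          (probVec Sin a - probVec T a) * (probVec Sin b - probVec T b) = 0 := by
        intro T hT
        rw [Finset.mem_powersetCard] at hT
        have hbT : b ∉ T := fun h => hb (hT.1 h)
        simp [probVec, hb, hbT]
      rw [Finset.sum_congr rfl this, Finset.sum_const]
      have hpb : probVec Sin b = 0 := by simp [probVec, hb]
      by_cases hab : a = b
      · subst hab; simp [hpb]
      · simp [hpb, hab]
  · have : ∀ T ∈ Sin.powersetCard nout,
        (probVec Sin a - probVec T a) * (probVec Sin b - probVec T b) = 0 := by
      intro T hT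
      rw [Finset.mem_powersetCard] at hT
      have haT : a ∉ T := fun h => ha (hT.1 h)
      simp [probVec, ha, haT]
    rw [Finset.sum_congr rfl this, Finset.sum_const]
    have hpa : probVec Sin a = 0 := by simp [probVec, ha]
    by_cases hab : a = b
    · subst hab; simp [hpa]
    · simp [hpa, hab]

lemma sumB {n : ℕ} (Sin : Finset (Fin n)) (nin nout : ℕ) (hnin : Sin.card = nin)
    (hnin2 : 2 ≤ nin) (hnout1 : 1 ≤ nout) (hnout2 : nout ≤ nin)
    (M : Matrix (Fin n) (Fin n) ℝ) :
    ∑ T ∈ Sin.powersetCard nout,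
        ((probVec Sin - probVec T) ⬝ᵥ (M *ᵥ (probVec Sin - probVec T))) =
      (nin.choose nout : ℝ) * ((1 / (nout : ℝ)) * (((nin : ℝ) - nout) / ((nin : ℝ) - 1))) *
        Cmat Sin M := by
  set c' : ℝ := (nin.choose nout : ℝ) *
    ((1 / (nout : ℝ)) * (((nin : ℝ) - nout) / ((nin : ℝ) - 1))) with hc'
  set p : Fin n → ℝ := probVec Sin with hp
  have step1 : ∑ T ∈ Sin.powersetCard nout,
      ((probVec Sin - probVec T) ⬝ᵥ (M *ᵥ (probVec Sin - probVec T))) =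
      ∑ a, ∑ b, M a b * ∑ T ∈ Sin.powersetCard nout,
        (probVec Sin a - probVec T a) * (probVec Sin b - probVec T b) := by
    simp only [dotProduct, Matrix.mulVec, Pi.sub_apply]
    rw [Finset.sum_comm]
    refine Finset.sum_congr rfl fun a _ => ?_
    simp only [Finset.mul_sum]
    rw [Finset.sum_comm]
    refine Finset.sum_congr rfl fun b _ => ?_
    exact Finset.sum_congr rfl fun T _ => by ring
  rw [step1]
  have step2 : ∀ a b : Fin n, M a b * ∑ T ∈ Sin.powersetCard nout,
      (probVec Sin a - probVec T a) * (probVec Sin b - probVec T b) =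
      M a b * (c' * ((if a = b then p a else 0) - p a * p b)) := by
    intro a b
    rw [Ssum Sin nin nout hnin hnin2 hnout1 hnout2 a b]
  simp only [step2]
  have step3 : ∀ a : Fin n, ∑ b, M a b * (c' * ((if a = b then p a else 0) - p a * p b)) =
      c' * (p a * M a a) - c' * (p a * ∑ b, M a b * p b) := by
    intro a
    have e1 : ∀ b, M a b * (c' * ((if a = b then p a else 0) - p a * p b)) =
        (if a = b then c' * (p a * M a a) else 0) - c' * (p a * (M a b * p b)) := by
      intro b
      by_cases h : a = b
      · subst h; simp; ring
      · simp [h]; ring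
    simp only [e1]
    rw [Finset.sum_sub_distrib, Finset.sum_ite_eq, if_pos (Finset.mem_univ a), ← Finset.mul_sum,
      ← Finset.mul_sum]
  simp only [step3]
  have eA : (∑ a, c' * (p a * M a a)) = c' * ∑ i, p i * M i i := by
    rw [Finset.mul_sum]
  have eB : (∑ a, c' * (p a * ∑ b, M a b * p b)) = c' * (p ⬝ᵥ (M *ᵥ p)) := by
    rw [← Finset.mul_sum]
    simp only [dotProduct, Matrix.mulVec]
  rw [Finset.sum_sub_distrib, eA, eB]
  unfold Cmat
  rw [← hp, mul_sub]

lemma int_repr {n : ℕ} {Ω : Type*} [MeasureSpace Ω]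
    (Sin : Finset (Fin n)) (nout : ℕ) (Sout : Ω → Finset (Fin n))
    (hsub : ∀ ω, Sout ω ⊆ Sin) (hcard : ∀ ω, (Sout ω).card = nout)
    (f : Finset (Fin n) → ℝ) :
    (fun ω => f (Sout ω)) = fun ω => ∑ T ∈ Sin.powersetCard nout,
      Set.indicator {ω' | Sout ω' = T} (fun _ => f T) ω := by
  funext ω
  rw [Finset.sum_eq_single (Sout ω)]
  · exact (Set.indicator_of_mem rfl _).symm
  · intro T _ hne
    exact Set.indicator_of_notMem (fun h => hne ((show Sout ω = T from h) ▸ rfl)) _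
  · intro h
    exact absurd (Finset.mem_powersetCard.2 ⟨hsub ω, hcard ω⟩) h

lemma int_integrable {n : ℕ} {Ω : Type*} [MeasureSpace Ω]
    [IsProbabilityMeasure (volume : Measure Ω)]
    (Sin : Finset (Fin n)) (nout : ℕ) (Sout : Ω → Finset (Fin n))
    (hsub : ∀ ω, Sout ω ⊆ Sin) (hcard : ∀ ω, (Sout ω).card = nout)
    (hmeas : ∀ T : Finset (Fin n), MeasurableSet {ω | Sout ω = T})
    (f : Finset (Fin n) → ℝ) :
    Integrable (fun ω => f (Sout ω)) := by
  rw [int_repr Sin nout Sout hsub hcard f]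
  exact integrable_finset_sum _ (fun T _ => (integrable_const (f T)).indicator (hmeas T))

lemma int_eq {n : ℕ} {Ω : Type*} [MeasureSpace Ω]
    [IsProbabilityMeasure (volume : Measure Ω)]
    (Sin : Finset (Fin n)) (nin nout : ℕ) (hnin : Sin.card = nin)
    (Sout : Ω → Finset (Fin n))
    (hsub : ∀ ω, Sout ω ⊆ Sin) (hcard : ∀ ω, (Sout ω).card = nout)
    (hmeas : ∀ T : Finset (Fin n), MeasurableSet {ω | Sout ω = T})
    (hunif : ∀ T : Finset (Fin n), T ⊆ Sin → T.card = nout →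
      volume {ω | Sout ω = T} = ENNReal.ofReal (1 / (nin.choose nout : ℝ)))
    (f : Finset (Fin n) → ℝ) :
    ∫ ω, f (Sout ω) = ∑ T ∈ Sin.powersetCard nout, f T * (1 / (nin.choose nout : ℝ)) := by
  rw [int_repr Sin nout Sout hsub hcard f]
  rw [integral_finset_sum _
    (fun T _ => (integrable_const (f T)).indicator (hmeas T))]
  refine Finset.sum_congr rfl fun T hT => ?_
  rw [Finset.mem_powersetCard] at hT
  rw [integral_indicator_const (f T) (hmeas T), measureReal_def, hunif T hT.1 hT.2,
    ENNReal.toReal_ofReal (by positivity), smul_eq_mul, mul_comm]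

theorem stmt0 {n : ℕ} {Ω : Type*} [MeasureSpace Ω]
    [IsProbabilityMeasure (volume : Measure Ω)]
    (Sin : Finset (Fin n)) (nin nout : ℕ)
    (hnin : Sin.card = nin) (hnin2 : 2 ≤ nin) (hnout1 : 1 ≤ nout) (hnout2 : nout ≤ nin)
    (Sout : Ω → Finset (Fin n))
    (hsub : ∀ ω, Sout ω ⊆ Sin) (hcard : ∀ ω, (Sout ω).card = nout)
    (hmeas : ∀ T : Finset (Fin n), MeasurableSet {ω | Sout ω = T})
    (hunif : ∀ T : Finset (Fin n), T ⊆ Sin → T.card = nout →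
      volume {ω | Sout ω = T} = ENNReal.ofReal (1 / (nin.choose nout : ℝ)))
    (K : Matrix (Fin n) (Fin n) ℝ) (hK : K.PosSemidef)
    (I : Finset (Fin n)) (hI : I.Nonempty) :
    (∫ ω, (probVec Sin - probVec (Sout ω)) ⬝ᵥ (K *ᵥ (probVec Sin - probVec (Sout ω)))) =
      (1 / (nout : ℝ)) * (((nin : ℝ) - (nout : ℝ)) / ((nin : ℝ) - 1)) * Cmat Sin K ∧
    (1 / (nout : ℝ)) * (((nin : ℝ) - (nout : ℝ)) / ((nin : ℝ) - 1)) *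
        (I.sup' hI fun i => Cmat Sin (Matrix.of fun a b => K a i * K i b)) ≤
      ∫ ω, I.sup' hI fun i =>
        (Pi.single i (1:ℝ) ⬝ᵥ (K *ᵥ (probVec Sin - probVec (Sout ω)))) ^ 2 := by
  have hchoose : (0:ℝ) < (nin.choose nout : ℝ) := by
    exact_mod_cast Nat.choose_pos hnout2
  have key : ∀ M : Matrix (Fin n) (Fin n) ℝ,
      (∫ ω, (probVec Sin - probVec (Sout ω)) ⬝ᵥ (M *ᵥ (probVec Sin - probVec (Sout ω)))) =
        (1 / (nout : ℝ)) * (((nin : ℝ) - (nout : ℝ)) / ((nin : ℝ) - 1)) * Cmat Sin M := by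
    intro M
    rw [int_eq Sin nin nout hnin Sout hsub hcard hmeas hunif
      (fun T => (probVec Sin - probVec T) ⬝ᵥ (M *ᵥ (probVec Sin - probVec T)))]
    rw [← Finset.sum_mul, sumB Sin nin nout hnin hnin2 hnout1 hnout2 M]
    have hNne : (nin.choose nout : ℝ) ≠ 0 := ne_of_gt hchoose
    have ht0 : (nout : ℝ) ≠ 0 := by positivity
    have hm1 : (nin : ℝ) - 1 ≠ 0 := by
      have : (2:ℝ) ≤ (nin:ℝ) := by exact_mod_cast hnin2
      linarith
    field_simp
  refine ⟨key K, ?_⟩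
  have hsymm : ∀ a b : Fin n, K a b = K b a := by
    intro a b
    have := hK.1.apply b a
    simpa using this
  have hgM : ∀ (i : Fin n) (T : Finset (Fin n)),
      (Pi.single i (1:ℝ) ⬝ᵥ (K *ᵥ (probVec Sin - probVec T))) ^ 2 =
      (probVec Sin - probVec T) ⬝ᵥ
        ((Matrix.of fun a b => K a i * K i b) *ᵥ (probVec Sin - probVec T)) := by
    intro i T
    rw [single_dotProduct, one_mul]
    simp only [dotProduct, Matrix.mulVec, Matrix.of_apply, Pi.sub_apply]
    rw [pow_two, Finset.sum_mul_sum]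
    refine Finset.sum_congr rfl fun a _ => ?_
    rw [Finset.mul_sum]
    refine Finset.sum_congr rfl fun b _ => ?_
    rw [hsymm a i]
    ring
  have hint : ∀ i : Fin n,
      (∫ ω, (Pi.single i (1:ℝ) ⬝ᵥ (K *ᵥ (probVec Sin - probVec (Sout ω)))) ^ 2) =
        (1 / (nout : ℝ)) * (((nin : ℝ) - (nout : ℝ)) / ((nin : ℝ) - 1)) *
          Cmat Sin (Matrix.of fun a b => K a i * K i b) := by
    intro i
    simp only [hgM]
    exact key _
  obtain ⟨i0, hi0, heq⟩ := Finset.exists_mem_eq_sup' hI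
    (fun i => Cmat Sin (Matrix.of fun a b => K a i * K i b))
  rw [heq, ← hint i0]
  refine integral_mono
    (int_integrable Sin nout Sout hsub hcard hmeas
      (fun T => (Pi.single i0 (1:ℝ) ⬝ᵥ (K *ᵥ (probVec Sin - probVec T))) ^ 2))
    (int_integrable Sin nout Sout hsub hcard hmeas
      (fun T => I.sup' hI fun i =>
        (Pi.single i (1:ℝ) ⬝ᵥ (K *ᵥ (probVec Sin - probVec T))) ^ 2))
    (fun ω => Finset.le_sup'
      (fun i => (Pi.single i (1:ℝ) ⬝ᵥ (K *ᵥ (probVec Sin - probVec (Sout ω)))) ^ 2) hi0)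

end
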